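/- There exist a finite p-group S, two distinct saturated fusion systems F and G over S, a normal subsystem E of both F and G over some T ≤ S, and a subsystem D normal in both N_F(T) and N_G(T), such that the product (ED)_F = F and (ED)_G = G. Hence the product subsystem ED depends on the ambient fusion system and not only on E and D. -/

import Mathlib

universe u v
open scoped Classical
/-- A fusion system on the finite `p`-group `S`, over its "support" subgroup `T`.
Morphisms on a subgroup `P ≤ T` are represented as functions `S → S` that are
injective group homomorphisms on `P` with values in `T`; membership in `Hom P`
only depends on the restriction to `P`. -/
structure FusionSystem (S : Type v) [Group S] where
  T : Subgroup S
  Hom : Subgroup S → Set (S → S)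
  mor_spec : ∀ P : Subgroup S, ∀ f ∈ Hom P, P ≤ T ∧ Set.InjOn f P ∧
    (∀ x ∈ P, f x ∈ T) ∧ ∀ x ∈ P, ∀ y ∈ P, f (x * y) = f x * f y
  ext_mem : ∀ P : Subgroup S, ∀ f ∈ Hom P, ∀ g : S → S,
    (∀ x ∈ P, g x = f x) → g ∈ Hom P
  id_mem : ∀ P : Subgroup S, P ≤ T → id ∈ Hom P
  conj_mem : ∀ t ∈ T, ∀ P : Subgroup S, P ≤ T → (fun x => t⁻¹ * x * t) ∈ Hom P
  comp_mem : ∀ P Q : Subgroup S, ∀ f ∈ Hom P, ∀ g ∈ Hom Q, (∀ x ∈ P, f x ∈ Q) →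
    (fun x => g (f x)) ∈ Hom P
  restrict_mem : ∀ P Q : Subgroup S, Q ≤ P → ∀ f ∈ Hom P, f ∈ Hom Q
  inv_mem : ∀ P Q : Subgroup S, ∀ f ∈ Hom P, (∀ x ∈ P, f x ∈ Q) →
    (∀ y ∈ Q, ∃ x ∈ P, f x = y) → ∃ g ∈ Hom Q, ∀ x ∈ P, g (f x) = x

namespace FusionSystem

variable {S : Type v} [Group S]

/-- `f` is an `F`-isomorphism from `P` onto `Q`. -/
def IsMorIso (F : FusionSystem S) (P Q : Subgroup S) (f : S → S) : Prop :=
  f ∈ F.Hom P ∧ (∀ x ∈ P, f x ∈ Q) ∧ ∀ y ∈ Q, ∃ x ∈ P, f x = y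

/-- `P` and `Q` are `F`-conjugate. -/
def IsConjSub (F : FusionSystem S) (P Q : Subgroup S) : Prop :=
  ∃ f, F.IsMorIso P Q f

/-- `E` is a subsystem of `F`. -/
def IsSubsystemOf (E F : FusionSystem S) : Prop :=
  E.T ≤ F.T ∧ ∀ P f, f ∈ E.Hom P → f ∈ F.Hom P

/-- Equality of fusion systems (extensional). -/
def FEq (E F : FusionSystem S) : Prop :=
  E.T = F.T ∧ ∀ P f, f ∈ E.Hom P ↔ f ∈ F.Hom P

/-- `U` is strongly `F`-closed. -/
def StronglyClosed (F : FusionSystem S) (U : Subgroup S) : Prop :=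
  U ≤ F.T ∧ ∀ P : Subgroup S, ∀ f ∈ F.Hom P, ∀ x ∈ P, x ∈ U → f x ∈ U

/-- The normalizer `N_T(P)` inside the support. -/
def NT (F : FusionSystem S) (P : Subgroup S) : Subgroup S := Subgroup.normalizer (P : Set S) ⊓ F.T

/-- `P` is fully `F`-normalized. -/
def FullyNormalized (F : FusionSystem S) (P : Subgroup S) : Prop :=
  P ≤ F.T ∧ ∀ Q, F.IsConjSub P Q → Nat.card ↥(F.NT Q) ≤ Nat.card ↥(F.NT P)

/-- Canonical representatives of the elements of `Aut_F(P)`. -/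
def autRes (F : FusionSystem S) (P : Subgroup S) : Set (S → S) :=
  {g | ∃ f ∈ F.Hom P, (∀ x ∈ P, f x ∈ P) ∧ g = fun x => if x ∈ P then f x else 1}

/-- Canonical representatives of the elements of `Aut_{N_T(P)}(P)` (conjugations). -/
def autSRes (F : FusionSystem S) (P : Subgroup S) : Set (S → S) :=
  {g | ∃ t ∈ F.NT P, g = fun x => if x ∈ P then t⁻¹ * x * t else 1}

/-- Canonical representatives of `Inn(P)`. -/
def innRes (F : FusionSystem S) (P : Subgroup S) : Set (S → S) :=
  {g | ∃ t ∈ P, g = fun x => if x ∈ P then t⁻¹ * x * t else 1}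

/-- `P` is fully automized: `Aut_S(P)` is a Sylow `p`-subgroup of `Aut_F(P)`. -/
def FullyAutomized (F : FusionSystem S) (p : ℕ) (P : Subgroup S) : Prop :=
  (∃ k, Nat.card ↥(F.autSRes P) = p ^ k) ∧
  ¬ p ∣ Nat.card ↥(F.autRes P) / Nat.card ↥(F.autSRes P)

/-- The group `N_φ` for an isomorphism `f : Q → P`. -/
def Nphi (F : FusionSystem S) (P Q : Subgroup S) (f : S → S) : Set S :=
  {g | g ∈ F.NT Q ∧ ∃ h ∈ F.NT P, ∀ x ∈ Q, f (g⁻¹ * x * g) = h⁻¹ * f x * h}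

/-- `P` is receptive: every isomorphism onto `P` extends to `N_φ`. -/
def Receptive (F : FusionSystem S) (P : Subgroup S) : Prop :=
  ∀ Q : Subgroup S, ∀ f, F.IsMorIso Q P f →
    ∃ fbar ∈ F.Hom (Subgroup.closure (F.Nphi P Q f)), ∀ x ∈ Q, fbar x = f x

/-- `F` is saturated: the support is a `p`-group and every fully normalized
subgroup is fully automized and receptive. -/
def IsSaturated (F : FusionSystem S) (p : ℕ) : Prop :=
  IsPGroup p F.T ∧ ∀ P : Subgroup S, P ≤ F.T → F.FullyNormalized P →
    F.FullyAutomized p P ∧ F.Receptive P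

/-- `P'` is the image of `P` under the function `a`. -/
def MapImage (a : S → S) (P P' : Subgroup S) : Prop :=
  (P' : Set S) = a '' (P : Set S)

/-- `E` is a normal subsystem of `F` in the sense of Aschbacher: a saturated,
`F`-invariant subsystem over a strongly closed subgroup satisfying the Frattini
and extension conditions. -/
def IsNormal (E F : FusionSystem S) (p : ℕ) : Prop :=
  E.IsSubsystemOf F ∧ F.StronglyClosed E.T ∧ E.IsSaturated p ∧
  (∀ P Q : Subgroup S, P ≤ Q → Q ≤ E.T → ∀ f ∈ E.Hom P, (∀ x ∈ P, f x ∈ Q) →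
    ∀ a ∈ F.Hom Q, ∀ P' : Subgroup S, MapImage a P P' →
      ∃ g ∈ E.Hom P', ∀ x ∈ P, g (a x) = a (f x)) ∧
  (∀ P : Subgroup S, P ≤ E.T → ∀ f ∈ F.Hom P, (∀ x ∈ P, f x ∈ E.T) →
    ∃ φ ∈ E.Hom P, ∃ a, F.IsMorIso E.T E.T a ∧ ∀ x ∈ P, f x = a (φ x)) ∧
  (∀ f, E.IsMorIso E.T E.T f →
    ∃ fbar ∈ F.Hom (E.T ⊔ (Subgroup.centralizer (E.T : Set S) ⊓ F.T)),
      (∀ x ∈ E.T, fbar x = f x) ∧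
      ∀ c ∈ Subgroup.centralizer (E.T : Set S) ⊓ F.T,
        fbar c * c⁻¹ ∈ Subgroup.centralizer (E.T : Set S) ⊓ E.T)

/-- `E` is a subnormal subsystem of `F`. -/
def IsSubnormal (E F : FusionSystem S) (p : ℕ) : Prop :=
  Relation.ReflTransGen (fun A B => IsNormal A B p) E F

/-- Specification of the morphisms of the normalizer subsystem `N_F(U)`:
morphisms defined on subgroups of `N_{F.T}(U)` extending to `F`-morphisms
defined on an overgroup containing `U` and mapping `U` onto `U`. -/
def NormHomSpec (F : FusionSystem S) (U P : Subgroup S) (f : S → S) : Prop :=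
  P ≤ Subgroup.normalizer (U : Set S) ⊓ F.T ∧
  ∃ P' : Subgroup S, ∃ g ∈ F.Hom P', P ≤ P' ∧ U ≤ P' ∧
    (∀ x ∈ U, g x ∈ U) ∧ (∀ y ∈ U, ∃ x ∈ U, g x = y) ∧ ∀ x ∈ P, f x = g x

/-- `M` is the normalizer subsystem `N_F(U)`. -/
def IsNormalizerSystem (F : FusionSystem S) (U : Subgroup S) (M : FusionSystem S) : Prop :=
  M.T = Subgroup.normalizer (U : Set S) ⊓ F.T ∧ ∀ P f, f ∈ M.Hom P ↔ F.NormHomSpec U P f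

/-- `Q` is a normal subgroup of the fusion system `F`. -/
def IsNormalSubgroup (F : FusionSystem S) (Q : Subgroup S) : Prop :=
  Q ≤ F.T ∧ ∀ P : Subgroup S, ∀ f ∈ F.Hom P,
    ∃ g, g ∈ F.Hom (P ⊔ Q) ∧ (∀ x ∈ P, g x = f x) ∧ (∀ x ∈ Q, g x ∈ Q) ∧
      ∀ y ∈ Q, ∃ x ∈ Q, g x = y

/-- `O_p(F)` : the largest normal subgroup of `F`. -/
def Op (F : FusionSystem S) : Subgroup S :=
  ⨆ Q ∈ {Q : Subgroup S | F.IsNormalSubgroup Q}, Q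

/-- `P` is `F`-centric. -/
def IsCentric (F : FusionSystem S) (P : Subgroup S) : Prop :=
  P ≤ F.T ∧ ∀ Q, F.IsConjSub P Q → Subgroup.centralizer (Q : Set S) ⊓ F.T ≤ Q

/-- Composition of canonical automorphism representatives. -/
noncomputable def compRes (P : Subgroup S) (f g : S → S) : S → S :=
  fun x => if x ∈ P then g (f x) else 1

/-- `P` is `F`-radical: `O_p(Out_F(P)) = 1`, expressed via normal subgroups of
`Aut_F(P)` containing `Inn(P)` with `p`-power index over `Inn(P)`. -/
def IsRadical (F : FusionSystem S) (p : ℕ) (P : Subgroup S) : Prop :=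
  ∀ A : Set (S → S), F.innRes P ⊆ A → A ⊆ F.autRes P →
    (∀ a ∈ A, ∀ b ∈ A, compRes P a b ∈ A) →
    (∀ a ∈ A, ∀ b ∈ F.autRes P, ∀ bi ∈ F.autRes P, (∀ x ∈ P, bi (b x) = x) →
      compRes P (compRes P bi a) b ∈ A) →
    (∃ k, Nat.card ↥A / Nat.card ↥(F.innRes P) = p ^ k) → A ⊆ F.innRes P

/-- `P` is `F`-subcentric: for every fully normalized `F`-conjugate `Q` of `P`,
`O_p(N_F(Q))` is `F`-centric. -/
def IsSubcentric (F : FusionSystem S) (p : ℕ) (P : Subgroup S) : Prop :=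
  P ≤ F.T ∧ ∀ Q, F.IsConjSub P Q → F.FullyNormalized Q →
    ∀ M : FusionSystem S, F.IsNormalizerSystem Q M → F.IsCentric (Op M)

/-- The center `Z(F)`. -/
def center (F : FusionSystem S) : Subgroup S :=
  ⨆ Z ∈ {Z : Subgroup S | Z ≤ F.T ∧ Z ≤ Subgroup.centralizer (F.T : Set S) ∧
    ∀ P : Subgroup S, ∀ f ∈ F.Hom P, ∃ g ∈ F.Hom (P ⊔ Z),
      (∀ x ∈ P, g x = f x) ∧ ∀ z ∈ Z, g z = z}, Z

/-- `F` is quasisimple: saturated, noncentral, and every proper normal subsystem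
is central. -/
def IsQuasisimple (F : FusionSystem S) (p : ℕ) : Prop :=
  F.IsSaturated p ∧ ¬ F.T ≤ F.center ∧
  ∀ E : FusionSystem S, IsNormal E F p → E.T = F.T ∨ E.T ≤ F.center

/-- `C` is a component of `F`: a subnormal quasisimple subsystem. -/
def IsComponent (F C : FusionSystem S) (p : ℕ) : Prop :=
  IsSubnormal C F p ∧ C.IsQuasisimple p

/-- The support `S ∩ E(F)` of the layer of `F`. -/
def layerSupport (F : FusionSystem S) (p : ℕ) : Subgroup S :=
  ⨆ C ∈ {C : FusionSystem S | IsComponent F C p}, C.T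

/-- The support `S ∩ F*(F)` of the generalized Fitting subsystem of `F`. -/
def FstarSupport (F : FusionSystem S) (p : ℕ) : Subgroup S :=
  F.layerSupport p ⊔ F.Op

/-- The set `δ(F) = {P ≤ S : P ∩ F*(F) ∈ F^s}`. -/
def delta (F : FusionSystem S) (p : ℕ) : Set (Subgroup S) :=
  {P | P ≤ F.T ∧ F.IsSubcentric p (P ⊓ F.FstarSupport p)}

/-- `ED` is the product of the normal subsystem `E` (over `T`) of `F` and the
subnormal subsystem `D` of `N_F(T)`: the smallest subnormal subsystem of `F`
containing `E` as a normal subsystem and `D` as a subnormal subsystem of its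
`T`-normalizer, over `T·(S ∩ D)`. -/
def IsProductSystem (F E D : FusionSystem S) (T : Subgroup S) (p : ℕ)
    (ED : FusionSystem S) : Prop :=
  IsSubnormal ED F p ∧ ED.T = T ⊔ D.T ∧ IsNormal E ED p ∧
  (∀ M : FusionSystem S, IsNormalizerSystem ED T M → IsSubnormal D M p) ∧
  ∀ X : FusionSystem S, IsSubnormal X F p → IsNormal E X p →
    (∀ M : FusionSystem S, IsNormalizerSystem X T M → IsSubnormal D M p) →
    IsSubnormal ED X p

end FusionSystem

namespace FusionSystem

section Aux

variable {S : Type v} [CommGroup S]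

/-- Subnormal subsystems are subsystems. -/
theorem IsSubnormal.isSubsystemOf {X F : FusionSystem S} {p : ℕ}
    (h : IsSubnormal X F p) : X.IsSubsystemOf F := by
  induction h with
  | refl => exact ⟨le_rfl, fun _ _ h => h⟩
  | tail hab hbc ih => exact ⟨ih.1.trans hbc.1.1, fun P f hf => hbc.1.2 P f (ih.2 P f hf)⟩

/-- Transfer of normality along an extensional equality of the ambient system. -/
theorem isNormal_congr {M F D : FusionSystem S} {p : ℕ} (hT : M.T = F.T)
    (hH : ∀ P f, f ∈ M.Hom P ↔ f ∈ F.Hom P) (h : IsNormal D F p) : IsNormal D M p := by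
  obtain ⟨hsub, hsc, hsat, hinv, hfrat, hext⟩ := h
  refine ⟨⟨hT ▸ hsub.1, fun P f hf => (hH P f).2 (hsub.2 P f hf)⟩,
    ⟨hT ▸ hsc.1, fun P f hf x hx hxD => hsc.2 P f ((hH P f).1 hf) x hx hxD⟩, hsat,
    ?_, ?_, ?_⟩
  · intro P Q hPQ hQT f hf hfQ a ha P' hP'
    exact hinv P Q hPQ hQT f hf hfQ a ((hH Q a).1 ha) P' hP'
  · intro P hP f hf hfT
    obtain ⟨φ, hφ, a, ⟨ha1, ha2, ha3⟩, hfa⟩ := hfrat P hP f ((hH P f).1 hf) hfT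
    exact ⟨φ, hφ, a, ⟨(hH _ a).2 ha1, ha2, ha3⟩, hfa⟩
  · intro f hf
    rw [hT]
    obtain ⟨fbar, h1, h2, h3⟩ := hext f hf
    exact ⟨fbar, (hH _ fbar).2 h1, h2, h3⟩

variable (T : Subgroup S) (α : S → S)

/-- The fusion system on `T` generated by an involutory automorphism `α`
preserving `T` (together with the identity). -/
def ofAuts (hhom : ∀ x y : S, α (x * y) = α x * α y)
    (hαα : ∀ x : S, α (α x) = x) (hT : ∀ x ∈ T, α x ∈ T) : FusionSystem S where
  T := T
  Hom P := {f | P ≤ T ∧ ((∀ x ∈ P, f x = x) ∨ (∀ x ∈ P, f x = α x))}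
  mor_spec := by
    rintro P f ⟨hPT, hd⟩
    refine ⟨hPT, ?_, ?_, ?_⟩
    · rcases hd with h | h
      · intro x hx y hy hxy; rwa [h x hx, h y hy] at hxy
      · intro x hx y hy hxy
        rw [h x hx, h y hy] at hxy
        have := congrArg α hxy; rwa [hαα, hαα] at this
    · rcases hd with h | h
      · intro x hx; rw [h x hx]; exact hPT hx
      · intro x hx; rw [h x hx]; exact hT x (hPT hx)
    · rcases hd with h | h
      · intro x hx y hy; rw [h x hx, h y hy, h _ (mul_mem hx hy)]
      · intro x hx y hy; rw [h x hx, h y hy, h _ (mul_mem hx hy), hhom]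
  ext_mem := by
    rintro P f ⟨hPT, hd⟩ g hg
    refine ⟨hPT, ?_⟩
    rcases hd with h | h
    · exact Or.inl fun x hx => (hg x hx).trans (h x hx)
    · exact Or.inr fun x hx => (hg x hx).trans (h x hx)
  id_mem := fun P hP => ⟨hP, Or.inl fun x _ => rfl⟩
  conj_mem := by
    intro t _ P hP
    refine ⟨hP, Or.inl fun x _ => ?_⟩
    show t⁻¹ * x * t = x
    rw [mul_comm t⁻¹ x, inv_mul_cancel_right]
  comp_mem := by
    rintro P Q f ⟨hPT, hdf⟩ g ⟨hQT, hdg⟩ hfQ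
    refine ⟨hPT, ?_⟩
    rcases hdf with hf | hf <;> rcases hdg with hg | hg
    · exact Or.inl fun x hx => by show g (f x) = x; rw [hg _ (hfQ x hx), hf x hx]
    · exact Or.inr fun x hx => by show g (f x) = α x; rw [hg _ (hfQ x hx), hf x hx]
    · exact Or.inr fun x hx => by show g (f x) = α x; rw [hg _ (hfQ x hx), hf x hx]
    · exact Or.inl fun x hx => by show g (f x) = x; rw [hg _ (hfQ x hx), hf x hx, hαα]
  restrict_mem := by
    rintro P Q hQP f ⟨hPT, hd⟩
    refine ⟨hQP.trans hPT, ?_⟩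
    rcases hd with h | h
    · exact Or.inl fun x hx => h x (hQP hx)
    · exact Or.inr fun x hx => h x (hQP hx)
  inv_mem := by
    rintro P Q f ⟨hPT, hd⟩ hfQ hQf
    rcases hd with h | h
    · have hQP : Q ≤ T := by
        intro y hy
        obtain ⟨x, hx, hfx⟩ := hQf y hy
        rw [h x hx] at hfx; exact hfx ▸ hPT hx
      exact ⟨id, ⟨hQP, Or.inl fun x _ => rfl⟩, fun x hx => by simp [h x hx]⟩
    · have hQP : Q ≤ T := by
        intro y hy
        obtain ⟨x, hx, hfx⟩ := hQf y hy
        rw [h x hx] at hfx; exact hfx ▸ hT x (hPT hx)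
      exact ⟨α, ⟨hQP, Or.inr fun x _ => rfl⟩, fun x hx => by rw [h x hx, hαα]⟩

variable (hhom : ∀ x y : S, α (x * y) = α x * α y)
    (hαα : ∀ x : S, α (α x) = x) (hT : ∀ x ∈ T, α x ∈ T)

theorem ofAuts_T : (ofAuts T α hhom hαα hT).T = T := rfl

theorem mem_ofAuts_hom {P : Subgroup S} {f : S → S} :
    f ∈ (ofAuts T α hhom hαα hT).Hom P ↔
      P ≤ T ∧ ((∀ x ∈ P, f x = x) ∨ (∀ x ∈ P, f x = α x)) := Iff.rfl

theorem ofAuts_isSaturated [Finite S] (h3 : ∀ g : S, g ^ 3 = 1) :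
    (ofAuts T α hhom hαα hT).IsSaturated 3 := by
  set F := ofAuts T α hhom hαα hT with hF
  constructor
  · intro g
    exact ⟨1, by ext; exact h3 (g : S)⟩
  intro P hPT _
  have hauS : F.autSRes P = {fun x => if x ∈ P then x else 1} := by
    ext g
    constructor
    · rintro ⟨t, _, rfl⟩
      have : (fun x => if x ∈ P then t⁻¹ * x * t else 1)
          = fun x => if x ∈ P then x else 1 := by
        funext x
        by_cases hx : x ∈ P
        · simp only [if_pos hx]; rw [mul_comm t⁻¹ x, inv_mul_cancel_right]
        · simp only [if_neg hx]
      simpa using this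
    · rintro rfl
      refine ⟨1, one_mem _, ?_⟩
      funext x
      by_cases hx : x ∈ P <;> simp [hx]
  have hcardS : Nat.card ↥(F.autSRes P) = 1 := by
    rw [hauS, Nat.card_coe_set_eq, Set.ncard_singleton]
  have hsub : F.autRes P ⊆
      insert (fun x => if x ∈ P then x else 1) {fun x => if x ∈ P then α x else 1} := by
    rintro g ⟨f, ⟨_, hd⟩, hfP, rfl⟩
    rcases hd with h | h
    · refine Set.mem_insert_iff.mpr (Or.inl ?_)
      funext x; by_cases hx : x ∈ P
      · simp only [if_pos hx]; exact h x hx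
      · simp only [if_neg hx]
    · refine Set.mem_insert_iff.mpr (Or.inr ?_)
      show _ = fun x => if x ∈ P then α x else 1
      funext x; by_cases hx : x ∈ P
      · simp only [if_pos hx]; exact h x hx
      · simp only [if_neg hx]
  have hmem : (fun x => if x ∈ P then x else 1) ∈ F.autRes P :=
    ⟨id, ⟨hPT, Or.inl fun x _ => rfl⟩, fun x hx => hx, rfl⟩
  have hle : Nat.card ↥(F.autRes P) ≤ 2 := by
    rw [Nat.card_coe_set_eq]
    refine (Set.ncard_le_ncard hsub (Set.toFinite _)).trans ?_
    refine (Set.ncard_insert_le _ _).trans ?_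
    simp [Set.ncard_singleton]
  have hpos : 1 ≤ Nat.card ↥(F.autRes P) := by
    rw [Nat.card_coe_set_eq]
    exact (Set.ncard_pos (Set.toFinite _)).mpr ⟨_, hmem⟩
  constructor
  · refine ⟨⟨0, by rw [hcardS]; rfl⟩, ?_⟩
    rw [hcardS, Nat.div_one]
    omega
  · rintro Q f ⟨⟨hQT, hd⟩, _, _⟩
    have hcl : Subgroup.closure (F.Nphi P Q f) ≤ T := by
      rw [Subgroup.closure_le]
      rintro g ⟨hg, -⟩
      exact (Subgroup.mem_inf.mp hg).2
    rcases hd with h | h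
    · exact ⟨id, ⟨hcl, Or.inl fun x _ => rfl⟩, fun x hx => (h x hx).symm⟩
    · exact ⟨α, ⟨hcl, Or.inr fun x _ => rfl⟩, fun x hx => (h x hx).symm⟩

end Aux

end FusionSystem

namespace FusionSystem

section Aux2

variable {S : Type v} [CommGroup S]

theorem normalizer_eq_top' (U : Subgroup S) : Subgroup.normalizer (U : Set S) = ⊤ :=
  Subgroup.normalizer_eq_top_iff.mpr inferInstance

/-- The normalizer system `N_X(U)` of an arbitrary fusion system `X` over a
commutative group, at a subgroup `U ≤ X.T`. -/
def normSys (X : FusionSystem S) (U : Subgroup S) (hU : U ≤ X.T) : FusionSystem S where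
  T := Subgroup.normalizer (U : Set S) ⊓ X.T
  Hom P := {f | X.NormHomSpec U P f}
  mor_spec := by
    rintro P f ⟨hP, P', g, hg, hPP', hUP', hgU, hgUs, hfg⟩
    obtain ⟨hP'T, hinj, hmem, hmul⟩ := X.mor_spec P' g hg
    refine ⟨hP, ?_, ?_, ?_⟩
    · intro x hx y hy hxy
      rw [hfg x hx, hfg y hy] at hxy
      exact hinj (hPP' hx) (hPP' hy) hxy
    · intro x hx
      rw [hfg x hx]
      exact Subgroup.mem_inf.mpr ⟨by rw [normalizer_eq_top']; trivial, hmem x (hPP' hx)⟩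
    · intro x hx y hy
      rw [hfg x hx, hfg y hy, hfg _ (mul_mem hx hy)]
      exact hmul x (hPP' hx) y (hPP' hy)
  ext_mem := by
    rintro P f ⟨hP, P', g, hg, hPP', hUP', hgU, hgUs, hfg⟩ g' hg'
    exact ⟨hP, P', g, hg, hPP', hUP', hgU, hgUs,
      fun x hx => (hg' x hx).trans (hfg x hx)⟩
  id_mem := by
    intro P hP
    exact ⟨hP, P ⊔ U, id, X.id_mem _ (sup_le ((le_inf_iff.mp hP).2) hU), le_sup_left,
      le_sup_right, fun x hx => hx, fun y hy => ⟨y, hy, rfl⟩, fun x _ => rfl⟩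
  conj_mem := by
    intro t _ P hP
    refine ⟨hP, P ⊔ U, id, X.id_mem _ (sup_le ((le_inf_iff.mp hP).2) hU), le_sup_left,
      le_sup_right, fun x hx => hx, fun y hy => ⟨y, hy, rfl⟩, fun x _ => ?_⟩
    show t⁻¹ * x * t = x
    rw [mul_comm t⁻¹ x, inv_mul_cancel_right]
  comp_mem := by
    rintro P Q f ⟨hP, Pf, gf, hgf, hPPf, hUPf, hgfU, hgfUs, hffg⟩
      g ⟨hQ, Pg, gg, hgg, hQPg, hUPg, hggU, hggUs, hggg⟩ hfQ
    have hgf' : gf ∈ X.Hom (P ⊔ U) := X.restrict_mem Pf (P ⊔ U) (sup_le hPPf hUPf) gf hgf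
    have hgg' : gg ∈ X.Hom (Q ⊔ U) := X.restrict_mem Pg (Q ⊔ U) (sup_le hQPg hUPg) gg hgg
    have hmulf := (X.mor_spec Pf gf hgf).2.2.2
    have hmulg := (X.mor_spec Pg gg hgg).2.2.2
    have hmaps : ∀ x ∈ P ⊔ U, gf x ∈ Q ⊔ U := by
      intro x hx
      obtain ⟨y, hy, z, hz, rfl⟩ := Subgroup.mem_sup.mp hx
      rw [hmulf y (hPPf hy) z (hUPf hz)]
      exact mul_mem (Subgroup.mem_sup_left (by rw [← hffg y hy]; exact hfQ y hy))
        (Subgroup.mem_sup_right (hgfU z hz))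
    have hcomp := X.comp_mem (P ⊔ U) (Q ⊔ U) gf hgf' gg hgg' hmaps
    refine ⟨hP, P ⊔ U, (fun x => gg (gf x)), hcomp, le_sup_left, le_sup_right,
      fun x hx => hggU _ (hgfU x hx), ?_, ?_⟩
    · intro y hy
      obtain ⟨u2, hu2, hu2y⟩ := hggUs y hy
      obtain ⟨u1, hu1, hu1u⟩ := hgfUs u2 hu2
      exact ⟨u1, hu1, by show gg (gf u1) = y; rw [hu1u, hu2y]⟩
    · intro x hx
      show g (f x) = gg (gf x)
      rw [hggg _ (hfQ x hx), hffg x hx]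
  restrict_mem := by
    rintro P Q hQP f ⟨hP, P', g, hg, hPP', hUP', hgU, hgUs, hfg⟩
    exact ⟨hQP.trans hP, P', g, hg, hQP.trans hPP', hUP', hgU, hgUs,
      fun x hx => hfg x (hQP hx)⟩
  inv_mem := by
    rintro P Q f ⟨hP, P', g, hg, hPP', hUP', hgU, hgUs, hfg⟩ hfQ hQf
    have hg' : g ∈ X.Hom (P ⊔ U) := X.restrict_mem P' (P ⊔ U) (sup_le hPP' hUP') g hg
    have hmul := (X.mor_spec P' g hg).2.2.2
    have hmaps : ∀ x ∈ P ⊔ U, g x ∈ Q ⊔ U := by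
      intro x hx
      obtain ⟨y, hy, z, hz, rfl⟩ := Subgroup.mem_sup.mp hx
      rw [hmul y (hPP' hy) z (hUP' hz)]
      exact mul_mem (Subgroup.mem_sup_left (by rw [← hfg y hy]; exact hfQ y hy))
        (Subgroup.mem_sup_right (hgU z hz))
    have hsurj : ∀ w ∈ Q ⊔ U, ∃ x ∈ P ⊔ U, g x = w := by
      intro w hw
      obtain ⟨q, hq, u, hu, rfl⟩ := Subgroup.mem_sup.mp hw
      obtain ⟨x0, hx0, hx0q⟩ := hQf q hq
      obtain ⟨u0, hu0, hu0u⟩ := hgUs u hu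
      refine ⟨x0 * u0, mul_mem (Subgroup.mem_sup_left hx0) (Subgroup.mem_sup_right hu0), ?_⟩
      rw [hmul x0 (hPP' hx0) u0 (hUP' hu0), hu0u, ← hfg x0 hx0, hx0q]
    obtain ⟨h, hh, hhg⟩ := X.inv_mem (P ⊔ U) (Q ⊔ U) g hg' hmaps hsurj
    have hQT : Q ≤ Subgroup.normalizer (U : Set S) ⊓ X.T := by
      intro y hy
      obtain ⟨x, hx, hfx⟩ := hQf y hy
      rw [← hfx, hfg x hx]
      exact Subgroup.mem_inf.mpr ⟨by rw [normalizer_eq_top']; trivial,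
        (X.mor_spec P' g hg).2.2.1 x (hPP' hx)⟩
    refine ⟨h, ⟨hQT, Q ⊔ U, h, hh, le_sup_left, le_sup_right, ?_, ?_, fun x _ => rfl⟩, ?_⟩
    · intro u hu
      obtain ⟨u0, hu0, hu0u⟩ := hgUs u hu
      rw [← hu0u, hhg u0 (Subgroup.mem_sup_right hu0)]
      exact hu0
    · intro u0 hu0
      exact ⟨g u0, hgU u0 hu0, hhg u0 (Subgroup.mem_sup_right hu0)⟩
    · intro x hx
      rw [hfg x hx]
      exact hhg x (Subgroup.mem_sup_left hx)

theorem normSys_spec (X : FusionSystem S) (U : Subgroup S) (hU : U ≤ X.T) :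
    X.IsNormalizerSystem U (normSys X U hU) :=
  ⟨rfl, fun _ _ => Iff.rfl⟩

variable (T₁ T₂ : Subgroup S) (α₁ α₂ : S → S)
  (hhom₁ : ∀ x y : S, α₁ (x * y) = α₁ x * α₁ y) (hαα₁ : ∀ x : S, α₁ (α₁ x) = x)
  (hT₁ : ∀ x ∈ T₁, α₁ x ∈ T₁)
  (hhom₂ : ∀ x y : S, α₂ (x * y) = α₂ x * α₂ y) (hαα₂ : ∀ x : S, α₂ (α₂ x) = x)
  (hT₂ : ∀ x ∈ T₂, α₂ x ∈ T₂)

/-- For systems of automorphism type, the normalizer-system specification at an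
invariant subgroup `U` collapses to plain membership. -/
theorem ofAuts_normHomSpec_iff [Finite S] {U : Subgroup S} (hUT : U ≤ T₂)
    (hUα : ∀ x ∈ U, α₂ x ∈ U) (P : Subgroup S) (f : S → S) :
    (ofAuts T₂ α₂ hhom₂ hαα₂ hT₂).NormHomSpec U P f ↔
      f ∈ (ofAuts T₂ α₂ hhom₂ hαα₂ hT₂).Hom P := by
  constructor
  · rintro ⟨hP, P', g, ⟨hP'T, hd⟩, hPP', hUP', hgU, hgUs, hfg⟩
    refine ⟨hPP'.trans hP'T, ?_⟩
    rcases hd with h | h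
    · exact Or.inl fun x hx => (hfg x hx).trans (h x (hPP' hx))
    · exact Or.inr fun x hx => (hfg x hx).trans (h x (hPP' hx))
  · rintro ⟨hPT, hd⟩
    have hPn : P ≤ Subgroup.normalizer (U : Set S) ⊓ T₂ :=
      le_inf (by rw [normalizer_eq_top']; exact le_top) hPT
    rcases hd with h | h
    · exact ⟨hPn, P ⊔ U, id, ⟨sup_le hPT hUT, Or.inl fun x _ => rfl⟩, le_sup_left,
        le_sup_right, fun x hx => hx, fun y hy => ⟨y, hy, rfl⟩, fun x hx => h x hx⟩
    · exact ⟨hPn, P ⊔ U, α₂, ⟨sup_le hPT hUT, Or.inr fun x _ => rfl⟩, le_sup_left,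
        le_sup_right, fun x hx => hUα x hx, fun y hy => ⟨α₂ y, hUα y hy, hαα₂ y⟩,
        fun x hx => h x hx⟩

/-- Any realization of `N_F(U)` for `F` of automorphism type with `U` invariant
is extensionally equal to `F` itself. -/
theorem ofAuts_normalizer_feq [Finite S] {U : Subgroup S} (hUT : U ≤ T₂)
    (hUα : ∀ x ∈ U, α₂ x ∈ U) (M : FusionSystem S)
    (hM : (ofAuts T₂ α₂ hhom₂ hαα₂ hT₂).IsNormalizerSystem U M) :
    M.T = (ofAuts T₂ α₂ hhom₂ hαα₂ hT₂).T ∧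
      ∀ P f, f ∈ M.Hom P ↔ f ∈ (ofAuts T₂ α₂ hhom₂ hαα₂ hT₂).Hom P := by
  refine ⟨?_, fun P f => (hM.2 P f).trans
    (ofAuts_normHomSpec_iff T₂ α₂ hhom₂ hαα₂ hT₂ hUT hUα P f)⟩
  rw [hM.1, normalizer_eq_top', top_inf_eq]

/-- The main normality criterion between two systems of automorphism type. -/
theorem ofAuts_isNormal [Finite S] (h3 : ∀ g : S, g ^ 3 = 1)
    (hle : T₁ ≤ T₂) (hc1 : ∀ x ∈ T₁, α₂ x ∈ T₁)
    (hcomm : ∀ x ∈ T₁, α₁ (α₂ x) = α₂ (α₁ x))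
    (hagree : (∀ x ∈ T₁, α₁ x = x) ∨
      ((∀ x ∈ T₁, α₂ x = α₁ x) ∧ ∀ c ∈ T₂, α₂ c * c⁻¹ ∈ T₁)) :
    IsNormal (ofAuts T₁ α₁ hhom₁ hαα₁ hT₁) (ofAuts T₂ α₂ hhom₂ hαα₂ hT₂) 3 := by
  set E := ofAuts T₁ α₁ hhom₁ hαα₁ hT₁ with hE
  set F := ofAuts T₂ α₂ hhom₂ hαα₂ hT₂ with hF
  have hsubE : ∀ P f, f ∈ E.Hom P → f ∈ F.Hom P := by
    rintro P f ⟨hPT, hd⟩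
    refine ⟨hPT.trans hle, ?_⟩
    rcases hd with h | h
    · exact Or.inl h
    rcases hagree with ha | ⟨ha, _⟩
    · exact Or.inl fun x hx => (h x hx).trans (ha x (hPT hx))
    · exact Or.inr fun x hx => (h x hx).trans (ha x (hPT hx)).symm
  refine ⟨⟨hle, hsubE⟩, ⟨hle, ?_⟩,
    ofAuts_isSaturated T₁ α₁ hhom₁ hαα₁ hT₁ h3, ?_, ?_, ?_⟩
  · -- strongly closed
    rintro P f ⟨hPT, hd⟩ x hx hxT
    rcases hd with h | h
    · rw [h x hx]; exact hxT
    · rw [h x hx]; exact hc1 x hxT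
  · -- invariance
    rintro P Q hPQ hQT f ⟨hPT, hdf⟩ hfQ a ⟨hQT₂, hda⟩ P' hP'
    have hP'T : P' ≤ T₁ := by
      intro y hy
      have : y ∈ (P' : Set S) := hy
      rw [hP'] at this
      obtain ⟨x, hx, rfl⟩ := this
      rcases hda with h | h
      · rw [h x (hPQ hx)]; exact hPT hx
      · rw [h x (hPQ hx)]; exact hc1 x (hPT hx)
    rcases hdf with hf | hf
    · refine ⟨id, ⟨hP'T, Or.inl fun x _ => rfl⟩, fun x hx => ?_⟩
      show a x = a (f x)
      rw [hf x hx]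
    · refine ⟨α₁, ⟨hP'T, Or.inr fun x _ => rfl⟩, fun x hx => ?_⟩
      show α₁ (a x) = a (f x)
      rcases hda with h | h
      · rw [h x (hPQ hx), h _ (hfQ x hx), hf x hx]
      · rw [h x (hPQ hx), h _ (hfQ x hx), hf x hx]
        exact hcomm x (hPT hx)
  · -- Frattini
    rintro P hPT f ⟨hPT₂, hd⟩ hfT
    rcases hd with h | h
    · refine ⟨id, ⟨hPT, Or.inl fun x _ => rfl⟩, id,
        ⟨⟨hle, Or.inl fun x _ => rfl⟩, fun x hx => hx, fun y hy => ⟨y, hy, rfl⟩⟩,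
        fun x hx => h x hx⟩
    · refine ⟨id, ⟨hPT, Or.inl fun x _ => rfl⟩, α₂,
        ⟨⟨hle, Or.inr fun x _ => rfl⟩, hc1, fun y hy => ⟨α₂ y, hc1 y hy, hαα₂ y⟩⟩,
        fun x hx => h x hx⟩
  · -- extension
    rintro f ⟨⟨_, hd⟩, hfT, hfTs⟩
    have hdom : (E.T ⊔ (Subgroup.centralizer (E.T : Set S) ⊓ F.T)) ≤ T₂ :=
      sup_le hle inf_le_right
    have hcent : ∀ y : S, y ∈ Subgroup.centralizer (E.T : Set S) :=
      fun y => Subgroup.mem_centralizer_iff.mpr fun g _ => mul_comm g y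
    have hidcase : ∀ c ∈ Subgroup.centralizer ((E.T : Subgroup S) : Set S) ⊓ F.T,
        id c * c⁻¹ ∈ Subgroup.centralizer ((E.T : Subgroup S) : Set S) ⊓ E.T := by
      intro c _
      have h1 : id c * c⁻¹ = 1 := by simp
      rw [h1]; exact one_mem _
    rcases hd with h | h
    · exact ⟨id, ⟨hdom, Or.inl fun x _ => rfl⟩, fun x hx => (h x hx).symm, hidcase⟩
    · rcases hagree with ha | ⟨ha, hcc⟩
      · exact ⟨id, ⟨hdom, Or.inl fun x _ => rfl⟩,
          fun x hx => ((h x hx).trans (ha x hx)).symm, hidcase⟩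
      · refine ⟨α₂, ⟨hdom, Or.inr fun x _ => rfl⟩,
          fun x hx => (ha x hx).trans (h x hx).symm, ?_⟩
        intro c hc
        exact Subgroup.mem_inf.mpr ⟨hcent _, hcc c (Subgroup.mem_inf.mp hc).2⟩

end Aux2

end FusionSystem

namespace FusionProductExample

open FusionSystem

abbrev K : Type := Multiplicative (ZMod 3 × ZMod 3)

def A0 : K → K := fun x =>
  Multiplicative.ofAdd (-(Multiplicative.toAdd x).1, (Multiplicative.toAdd x).2)

def B0 : K → K := fun x =>
  Multiplicative.ofAdd ((Multiplicative.toAdd x).2 - (Multiplicative.toAdd x).1,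
    (Multiplicative.toAdd x).2)

def e1K : K := Multiplicative.ofAdd (1, 0)
def e2K : K := Multiplicative.ofAdd (0, 1)

theorem k1 : ∀ x y : K, A0 (x * y) = A0 x * A0 y := by decide
theorem k2 : ∀ x : K, A0 (A0 x) = x := by decide
theorem k3 : ∀ x y : K, B0 (x * y) = B0 x * B0 y := by decide
theorem k4 : ∀ x : K, B0 (B0 x) = x := by decide
theorem k5 : ∀ x : K, (Multiplicative.toAdd x).2 = 0 → (Multiplicative.toAdd (A0 x)).2 = 0 := by
  decide
theorem k6 : ∀ x : K, (Multiplicative.toAdd x).2 = 0 → (Multiplicative.toAdd (B0 x)).2 = 0 := by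
  decide
theorem k7 : ∀ x : K, (Multiplicative.toAdd x).2 = 0 → A0 x = x⁻¹ := by decide
theorem k8 : ∀ x : K, (Multiplicative.toAdd x).2 = 0 → B0 x = x⁻¹ := by decide
theorem k9 : ∀ c : K, (Multiplicative.toAdd (A0 c * c⁻¹)).2 = 0 := by decide
theorem k10 : ∀ c : K, (Multiplicative.toAdd (B0 c * c⁻¹)).2 = 0 := by decide
theorem k11 : ∀ x : K, (A0 x)⁻¹ = A0 x⁻¹ := by decide
theorem k12 : ∀ x : K, (B0 x)⁻¹ = B0 x⁻¹ := by decide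
theorem k13 : ∀ g : K, g ^ 3 = 1 := by decide
theorem k14 : A0 e1K ≠ e1K := by decide
theorem k15 : A0 e2K ≠ B0 e2K := by decide
theorem k16 : e1K ≠ e1K⁻¹ := by decide
theorem k17 : (Multiplicative.toAdd e1K).2 = 0 := by decide

universe w

abbrev SL : Type w := ULift.{w} K

def aL : SL.{w} → SL.{w} := fun x => ⟨A0 x.down⟩
def bL : SL.{w} → SL.{w} := fun x => ⟨B0 x.down⟩
def e1L : SL.{w} := ⟨e1K⟩
def e2L : SL.{w} := ⟨e2K⟩

def TL : Subgroup SL.{w} where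
  carrier := {x | (Multiplicative.toAdd x.down).2 = 0}
  one_mem' := rfl
  mul_mem' := by
    intro x y hx hy
    show (Multiplicative.toAdd x.down).2 + (Multiplicative.toAdd y.down).2 = 0
    rw [hx, hy, add_zero]
  inv_mem' := by
    intro x hx
    show -(Multiplicative.toAdd x.down).2 = 0
    rw [hx, neg_zero]

theorem la1 : ∀ x y : SL.{w}, aL (x * y) = aL x * aL y :=
  fun x y => ULift.down_injective (k1 x.down y.down)
theorem la2 : ∀ x : SL.{w}, aL (aL x) = x := fun x => ULift.down_injective (k2 x.down)
theorem lb1 : ∀ x y : SL.{w}, bL (x * y) = bL x * bL y :=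
  fun x y => ULift.down_injective (k3 x.down y.down)
theorem lb2 : ∀ x : SL.{w}, bL (bL x) = x := fun x => ULift.down_injective (k4 x.down)
theorem l3 : ∀ g : SL.{w}, g ^ 3 = 1 := fun g => ULift.down_injective (k13 g.down)
theorem laTop : ∀ x ∈ (⊤ : Subgroup SL.{w}), aL x ∈ (⊤ : Subgroup SL) := fun _ _ => trivial
theorem lbTop : ∀ x ∈ (⊤ : Subgroup SL.{w}), bL x ∈ (⊤ : Subgroup SL) := fun _ _ => trivial

def Fsys : FusionSystem SL.{w} := ofAuts ⊤ aL la1 la2 laTop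
def Gsys : FusionSystem SL.{w} := ofAuts ⊤ bL lb1 lb2 lbTop
def Esys : FusionSystem SL.{w} :=
  ofAuts TL (fun x => x⁻¹) (fun x y => mul_inv x y) (fun x => inv_inv x)
    (fun x hx => TL.inv_mem hx)
def Dsys : FusionSystem SL.{w} :=
  ofAuts ⊤ id (fun _ _ => rfl) (fun _ => rfl) (fun _ _ => trivial)

theorem hEF : IsNormal Esys.{w} Fsys.{w} 3 :=
  ofAuts_isNormal TL ⊤ (fun x => x⁻¹) aL _ _ _ la1 la2 laTop l3 le_top (fun x hx => k5 x.down hx)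
    (fun x _ => ULift.down_injective (k11 x.down))
    (Or.inr ⟨fun x hx => ULift.down_injective (k7 x.down hx), fun c _ => k9 c.down⟩)

theorem hEG : IsNormal Esys.{w} Gsys.{w} 3 :=
  ofAuts_isNormal TL ⊤ (fun x => x⁻¹) bL _ _ _ lb1 lb2 lbTop l3 le_top (fun x hx => k6 x.down hx)
    (fun x _ => ULift.down_injective (k12 x.down))
    (Or.inr ⟨fun x hx => ULift.down_injective (k8 x.down hx), fun c _ => k10 c.down⟩)

theorem hDF : IsNormal Dsys.{w} Fsys.{w} 3 :=
  ofAuts_isNormal ⊤ ⊤ id aL _ _ _ la1 la2 laTop l3 le_rfl (fun _ _ => trivial)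
    (fun _ _ => rfl) (Or.inl fun _ _ => rfl)

theorem hDG : IsNormal Dsys.{w} Gsys.{w} 3 :=
  ofAuts_isNormal ⊤ ⊤ id bL _ _ _ lb1 lb2 lbTop l3 le_rfl (fun _ _ => trivial)
    (fun _ _ => rfl) (Or.inl fun _ _ => rfl)

theorem hFF : IsNormal Fsys.{w} Fsys.{w} 3 :=
  ofAuts_isNormal ⊤ ⊤ aL aL _ _ _ la1 la2 laTop l3 le_rfl (fun _ _ => trivial)
    (fun _ _ => rfl) (Or.inr ⟨fun _ _ => rfl, fun _ _ => trivial⟩)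

theorem hGG : IsNormal Gsys.{w} Gsys.{w} 3 :=
  ofAuts_isNormal ⊤ ⊤ bL bL _ _ _ lb1 lb2 lbTop l3 le_rfl (fun _ _ => trivial)
    (fun _ _ => rfl) (Or.inr ⟨fun _ _ => rfl, fun _ _ => trivial⟩)

theorem normF (M : FusionSystem SL.{w}) (hM : Fsys.{w}.IsNormalizerSystem TL M) :
    IsNormal Dsys M 3 := by
  have h := ofAuts_normalizer_feq ⊤ aL la1 la2 laTop le_top (fun x hx => k5 x.down hx) M hM
  exact isNormal_congr h.1 h.2 hDF

theorem normG (M : FusionSystem SL.{w}) (hM : Gsys.{w}.IsNormalizerSystem TL M) :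
    IsNormal Dsys M 3 := by
  have h := ofAuts_normalizer_feq ⊤ bL lb1 lb2 lbTop le_top (fun x hx => k6 x.down hx) M hM
  exact isNormal_congr h.1 h.2 hDG

theorem minF (X : FusionSystem SL.{w}) (hXsub : IsSubnormal X Fsys.{w} 3)
    (hEX : IsNormal Esys X 3)
    (hD : ∀ M : FusionSystem SL.{w}, X.IsNormalizerSystem TL M → IsSubnormal Dsys M 3) :
    IsSubnormal Fsys X 3 := by
  have hXF := hXsub.isSubsystemOf
  have hTX : TL ≤ X.T := hEX.1.1
  have hDM := hD _ (normSys_spec X TL hTX)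
  have hXT : X.T = ⊤ := top_le_iff.mp (hDM.isSubsystemOf.1.trans inf_le_right)
  have hiso : Esys.IsMorIso Esys.T Esys.T (fun x => x⁻¹) :=
    ⟨⟨le_rfl, Or.inr fun x _ => rfl⟩, fun x hx => TL.inv_mem hx,
      fun y hy => ⟨y⁻¹, TL.inv_mem hy, inv_inv y⟩⟩
  obtain ⟨fbar, hfbarX, hfbar1, -⟩ := hEX.2.2.2.2.2 _ hiso
  have hVtop : ∀ x : SL,
      x ∈ Esys.T ⊔ (Subgroup.centralizer (Esys.T : Set SL) ⊓ X.T) := by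
    intro x
    refine Subgroup.mem_sup_right (Subgroup.mem_inf.mpr ⟨?_, by rw [hXT]; trivial⟩)
    exact Subgroup.mem_centralizer_iff.mpr fun g _ => mul_comm g x
  obtain ⟨-, hd⟩ := hXF.2 _ fbar hfbarX
  have ha : ∀ x, fbar x = aL x := by
    rcases hd with h | h
    · exfalso
      have h1 : fbar e1L = e1L := h e1L (hVtop e1L)
      have h2 : fbar e1L = e1L⁻¹ := hfbar1 e1L k17
      exact k16 (congrArg ULift.down (h1.symm.trans h2))
    · exact fun x => h x (hVtop x)
  have hFX : ∀ P f, f ∈ Fsys.Hom P → f ∈ X.Hom P := by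
    rintro P f ⟨hPT, hdf⟩
    rcases hdf with h | h
    · exact X.ext_mem P id (X.id_mem P (by rw [hXT]; exact le_top)) f h
    · have hres := X.restrict_mem _ P (fun x _ => hVtop x) fbar hfbarX
      exact X.ext_mem P fbar hres f fun x hx => (h x hx).trans (ha x).symm
  exact Relation.ReflTransGen.single
    (isNormal_congr hXT (fun P f => ⟨hXF.2 P f, hFX P f⟩) hFF)

theorem minG (X : FusionSystem SL.{w}) (hXsub : IsSubnormal X Gsys.{w} 3)
    (hEX : IsNormal Esys X 3)
    (hD : ∀ M : FusionSystem SL.{w}, X.IsNormalizerSystem TL M → IsSubnormal Dsys M 3) :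
    IsSubnormal Gsys X 3 := by
  have hXF := hXsub.isSubsystemOf
  have hTX : TL ≤ X.T := hEX.1.1
  have hDM := hD _ (normSys_spec X TL hTX)
  have hXT : X.T = ⊤ := top_le_iff.mp (hDM.isSubsystemOf.1.trans inf_le_right)
  have hiso : Esys.IsMorIso Esys.T Esys.T (fun x => x⁻¹) :=
    ⟨⟨le_rfl, Or.inr fun x _ => rfl⟩, fun x hx => TL.inv_mem hx,
      fun y hy => ⟨y⁻¹, TL.inv_mem hy, inv_inv y⟩⟩
  obtain ⟨fbar, hfbarX, hfbar1, -⟩ := hEX.2.2.2.2.2 _ hiso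
  have hVtop : ∀ x : SL,
      x ∈ Esys.T ⊔ (Subgroup.centralizer (Esys.T : Set SL) ⊓ X.T) := by
    intro x
    refine Subgroup.mem_sup_right (Subgroup.mem_inf.mpr ⟨?_, by rw [hXT]; trivial⟩)
    exact Subgroup.mem_centralizer_iff.mpr fun g _ => mul_comm g x
  obtain ⟨-, hd⟩ := hXF.2 _ fbar hfbarX
  have ha : ∀ x, fbar x = bL x := by
    rcases hd with h | h
    · exfalso
      have h1 : fbar e1L = e1L := h e1L (hVtop e1L)
      have h2 : fbar e1L = e1L⁻¹ := hfbar1 e1L k17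
      exact k16 (congrArg ULift.down (h1.symm.trans h2))
    · exact fun x => h x (hVtop x)
  have hFX : ∀ P f, f ∈ Gsys.Hom P → f ∈ X.Hom P := by
    rintro P f ⟨hPT, hdf⟩
    rcases hdf with h | h
    · exact X.ext_mem P id (X.id_mem P (by rw [hXT]; exact le_top)) f h
    · have hres := X.restrict_mem _ P (fun x _ => hVtop x) fbar hfbarX
      exact X.ext_mem P fbar hres f fun x hx => (h x hx).trans (ha x).symm
  exact Relation.ReflTransGen.single
    (isNormal_congr hXT (fun P f => ⟨hXF.2 P f, hFX P f⟩) hGG)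

theorem prodF : IsProductSystem Fsys.{w} Esys Dsys TL 3 Fsys :=
  ⟨Relation.ReflTransGen.refl,
    (by show (⊤ : Subgroup SL) = TL ⊔ (⊤ : Subgroup SL); simp), hEF,
    fun M hM => Relation.ReflTransGen.single (normF M hM), minF⟩

theorem prodG : IsProductSystem Gsys.{w} Esys Dsys TL 3 Gsys :=
  ⟨Relation.ReflTransGen.refl,
    (by show (⊤ : Subgroup SL) = TL ⊔ (⊤ : Subgroup SL); simp), hEG,
    fun M hM => Relation.ReflTransGen.single (normG M hM), minG⟩

theorem neFG : ¬ FEq Fsys.{w} Gsys.{w} := by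
  rintro ⟨-, hH⟩
  have haF : aL ∈ Fsys.Hom ⊤ := ⟨le_rfl, Or.inr fun x _ => rfl⟩
  obtain ⟨-, hd⟩ := (hH ⊤ aL).mp haF
  rcases hd with h | h
  · exact k14 (congrArg ULift.down (h e1L trivial))
  · exact k15 (congrArg ULift.down (h e2L trivial))

theorem satF : Fsys.{w}.IsSaturated 3 := ofAuts_isSaturated ⊤ aL la1 la2 laTop l3
theorem satG : Gsys.{w}.IsSaturated 3 := ofAuts_isSaturated ⊤ bL lb1 lb2 lbTop l3

end FusionProductExample

open FusionSystem FusionProductExample in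
theorem FusionProductExample.main : ∃ p : ℕ, p.Prime ∧
    ∃ (Sb : GrpCat) (_ : Finite Sb), IsPGroup p Sb ∧
      ∃ F G E D : FusionSystem Sb, ∃ T : Subgroup Sb,
        F.T = ⊤ ∧ G.T = ⊤ ∧ F.IsSaturated p ∧ G.IsSaturated p ∧ ¬ FEq F G ∧
        IsNormal E F p ∧ IsNormal E G p ∧ E.T = T ∧
        (∀ M : FusionSystem Sb, F.IsNormalizerSystem T M → IsNormal D M p) ∧
        (∀ M : FusionSystem Sb, G.IsNormalizerSystem T M → IsNormal D M p) ∧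
        IsProductSystem F E D T p F ∧ IsProductSystem G E D T p G := by
  exact ⟨3, by norm_num, GrpCat.of SL, inferInstanceAs (Finite SL),
    fun g => ⟨1, by rw [pow_one]; exact l3 g⟩, Fsys, Gsys, Esys, Dsys, TL,
    rfl, rfl, satF, satG, neFG, hEF, hEG, rfl, normF, normG, prodF, prodG⟩

open FusionSystem in
/-- There exist a finite `p`-group `S`, distinct saturated
fusion systems `F ≠ G` over `S`, a subsystem `E` normal in both `F` and `G` over
some `T ≤ S`, and a subsystem `D` normal in both `N_F(T)` and `N_G(T)`, with
`(ED)_F = F` and `(ED)_G = G`: the product depends on the ambient system. -/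
theorem product_depends_on_ambient : ∃ p : ℕ, p.Prime ∧
    ∃ (Sb : GrpCat) (_ : Finite Sb), IsPGroup p Sb ∧
      ∃ F G E D : FusionSystem Sb, ∃ T : Subgroup Sb,
        F.T = ⊤ ∧ G.T = ⊤ ∧ F.IsSaturated p ∧ G.IsSaturated p ∧ ¬ FEq F G ∧
        IsNormal E F p ∧ IsNormal E G p ∧ E.T = T ∧
        (∀ M : FusionSystem Sb, F.IsNormalizerSystem T M → IsNormal D M p) ∧
        (∀ M : FusionSystem Sb, G.IsNormalizerSystem T M → IsNormal D M p) ∧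
        IsProductSystem F E D T p F ∧ IsProductSystem G E D T p G := by
  exact FusionProductExample.main
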